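/- arXiv:2404.03268 — 2 statements merged into one kernel-verified Lean document; each statement's English description precedes it below -/
import Mathlib

section
/- For every natural number N, the limit as M → ∞ of the ratio C(2M, N) / (∑_{k=0}^{⌊N/2⌋} C(M, N−k) · C(N−k, k)) equals 2^N. -/
open Filter

private lemma sub_div_tendsto (c j : ℕ) (hc : 1 ≤ c) :
    Tendsto (fun M : ℕ => ((c * M - j : ℕ) : ℝ) / (M : ℝ)) atTop (nhds c) := by
  have h1 : Tendsto (fun M : ℕ => (c : ℝ) - (j : ℝ) / (M : ℝ)) atTop (nhds ((c : ℝ) - 0)) :=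
    tendsto_const_nhds.sub (tendsto_const_nhds.div_atTop tendsto_natCast_atTop_atTop)
  rw [sub_zero] at h1
  refine h1.congr' ?_
  filter_upwards [eventually_ge_atTop (j + 1)] with M hM
  have hMj : j ≤ c * M := le_trans (Nat.le_of_succ_le hM) (Nat.le_mul_of_pos_left M hc)
  have hM0 : (M : ℝ) ≠ 0 := Nat.cast_ne_zero.mpr (by omega)
  rw [Nat.cast_sub hMj]
  push_cast
  field_simp

private lemma desc_tendsto (c : ℕ) (hc : 1 ≤ c) (j : ℕ) :
    Tendsto (fun M : ℕ => (((c * M).descFactorial j : ℕ) : ℝ) / (M : ℝ) ^ j) atTop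
      (nhds ((c : ℝ) ^ j)) := by
  induction j with
  | zero => simpa using (tendsto_const_nhds : Tendsto (fun _ : ℕ => (1 : ℝ)) atTop (nhds 1))
  | succ j ih =>
    have h2 := (sub_div_tendsto c j hc).mul ih
    rw [pow_succ']
    refine h2.congr fun M => ?_
    rw [Nat.descFactorial_succ]
    push_cast
    rw [pow_succ]
    ring

private lemma desc_small (j N : ℕ) (h : j < N) :
    Tendsto (fun M : ℕ => ((M.descFactorial j : ℕ) : ℝ) / (M : ℝ) ^ N) atTop (nhds 0) := by
  have h1 := desc_tendsto 1 le_rfl j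
  simp only [one_mul, Nat.cast_one, one_pow] at h1
  have h2 : Tendsto (fun M : ℕ => (M : ℝ) ^ j / (M : ℝ) ^ N) atTop (nhds 0) := by
    have hpow : Tendsto (fun M : ℕ => ((M : ℝ)) ^ (N - j)) atTop atTop :=
      (tendsto_pow_atTop (Nat.sub_ne_zero_of_lt h)).comp tendsto_natCast_atTop_atTop
    refine hpow.inv_tendsto_atTop.congr' ?_
    filter_upwards [eventually_ge_atTop 1] with M hM
    have hM0 : (M : ℝ) ≠ 0 := Nat.cast_ne_zero.mpr (by omega)
    simp only [Pi.inv_apply]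
    rw [pow_sub₀ _ hM0 h.le, mul_inv, inv_inv, inv_mul_eq_div]
  have h3 := h1.mul h2
  rw [one_mul] at h3
  refine h3.congr' ?_
  filter_upwards [eventually_ge_atTop 1] with M hM
  have hM0 : (M : ℝ) ≠ 0 := Nat.cast_ne_zero.mpr (by omega)
  field_simp

private lemma div_div_aux (a b c : ℝ) (hc : c ≠ 0) : a / c / (b / c) = a / b := by
  rcases eq_or_ne b 0 with hb | hb
  · simp [hb]
  · field_simp

private lemma choose_cast (n j : ℕ) :
    ((n.choose j : ℕ) : ℝ) = ((n.descFactorial j : ℕ) : ℝ) / (Nat.factorial j : ℝ) := by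
  have hj : (Nat.factorial j : ℝ) ≠ 0 := by positivity
  rw [Nat.descFactorial_eq_factorial_mul_choose, Nat.cast_mul, mul_comm, mul_div_assoc,
    div_self hj, mul_one]

/-- For every natural number `N`, the ratio
`C(2M, N) / (∑_{k=0}^{⌊N/2⌋} C(M, N−k)·C(N−k, k))` tends to `2^N` as `M → ∞`. -/
theorem stmt_2 (N : ℕ) :
    Tendsto
      (fun M : ℕ =>
        (Nat.choose (2 * M) N : ℝ) /
          ((∑ k ∈ Finset.range (N / 2 + 1),
              Nat.choose M (N - k) * Nat.choose (N - k) k : ℕ) : ℝ))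
      atTop (nhds ((2 : ℝ) ^ N)) := by
  have hNfac : (Nat.factorial N : ℝ) ≠ 0 := by positivity
  -- numerator / M^N
  have hnum : Tendsto (fun M : ℕ => ((2 * M).choose N : ℝ) / (M : ℝ) ^ N) atTop
      (nhds ((2 : ℝ) ^ N / (Nat.factorial N : ℝ))) := by
    have h := (desc_tendsto 2 (by norm_num) N).div_const (Nat.factorial N : ℝ)
    push_cast at h
    refine h.congr fun M => ?_
    rw [choose_cast, div_right_comm]
  -- denominator / M^N
  have hden : Tendsto (fun M : ℕ =>
      ((∑ k ∈ Finset.range (N / 2 + 1),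
        Nat.choose M (N - k) * Nat.choose (N - k) k : ℕ) : ℝ) / (M : ℝ) ^ N) atTop
      (nhds (1 / (Nat.factorial N : ℝ))) := by
    have hterm : ∀ k ∈ Finset.range (N / 2 + 1),
        Tendsto (fun M : ℕ =>
          ((Nat.choose M (N - k) * Nat.choose (N - k) k : ℕ) : ℝ) / (M : ℝ) ^ N) atTop
          (nhds (if k = 0 then (1 : ℝ) / (Nat.factorial N : ℝ) else 0)) := by
      intro k hk
      rcases Nat.eq_zero_or_pos k with hk0 | hk1
      · subst hk0
        simp only [Nat.sub_zero, Nat.choose_zero_right, mul_one, if_true]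
        have := (desc_tendsto 1 le_rfl N).div_const (Nat.factorial N : ℝ)
        simp only [one_mul, Nat.cast_one, one_pow] at this
        refine this.congr fun M => ?_
        rw [choose_cast, div_right_comm]
      · have hkN : N - k < N := by
          have hk2 : k ≤ N / 2 := Nat.lt_succ_iff.mp (Finset.mem_range.mp hk)
          have : k ≤ N := le_trans hk2 (Nat.div_le_self N 2)
          omega
        rw [if_neg (by omega)]
        have h0 := (desc_small (N - k) N hkN).div_const (Nat.factorial (N - k) : ℝ)
        rw [zero_div] at h0
        have h1 := h0.const_mul (((N - k).choose k : ℕ) : ℝ)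
        rw [mul_zero] at h1
        refine h1.congr fun M => ?_
        rw [Nat.cast_mul, choose_cast M (N - k), choose_cast (N - k) k]
        ring
    have hsum := tendsto_finset_sum _ hterm
    have hval : (∑ k ∈ Finset.range (N / 2 + 1),
        (if k = 0 then (1 : ℝ) / (Nat.factorial N : ℝ) else 0)) = 1 / (Nat.factorial N : ℝ) := by
      rw [Finset.sum_ite_eq' (Finset.range (N / 2 + 1)) 0 (fun _ => (1 : ℝ) / (Nat.factorial N : ℝ))]
      simp
    rw [hval] at hsum
    refine hsum.congr fun M => ?_
    rw [Nat.cast_sum, Finset.sum_div]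
  have hlim := hnum.div hden (by positivity)
  have heq : ((2 : ℝ) ^ N / (Nat.factorial N : ℝ)) / (1 / (Nat.factorial N : ℝ)) = 2 ^ N := by
    field_simp
  rw [heq] at hlim
  refine hlim.congr' ?_
  filter_upwards [eventually_ge_atTop 1] with M hM
  have hM0 : (M : ℝ) ^ N ≠ 0 := pow_ne_zero _ (Nat.cast_ne_zero.mpr (by omega))
  simp only [Pi.div_apply]
  rw [div_div_aux _ _ _ hM0]
end

section
/- For natural numbers M ≥ N ≥ 1, the Hund-subspace dimension satisfies ∑_{k=0}^{⌊N/2⌋} C(M, N−k)·C(N−k, k) ≤ C(2M, N), with strict inequality when N ≥ 2 and M ≥ 2. -/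
lemma vandermonde_2M (M N : ℕ) :
    Nat.choose (2 * M) N = ∑ j ∈ Finset.range (N + 1), Nat.choose M j * Nat.choose M (N - j) := by
  rw [two_mul, Nat.add_choose_eq, Finset.Nat.sum_antidiagonal_eq_sum_range_succ_mk]

lemma hund_lt (M N : ℕ) (hN : 1 ≤ N) (hNM : N ≤ M) :
    (∑ k ∈ Finset.range (N / 2 + 1), Nat.choose M (N - k) * Nat.choose (N - k) k) <
      Nat.choose (2 * M) N := by
  rw [vandermonde_2M]
  calc (∑ k ∈ Finset.range (N / 2 + 1), Nat.choose M (N - k) * Nat.choose (N - k) k)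
      ≤ ∑ k ∈ Finset.range (N / 2 + 1), Nat.choose M k * Nat.choose M (N - k) := by
        apply Finset.sum_le_sum
        intro k _
        rw [mul_comm]
        exact Nat.mul_le_mul (Nat.choose_le_choose k (le_trans (Nat.sub_le N k) hNM)) le_rfl
    _ < ∑ j ∈ Finset.range (N + 1), Nat.choose M j * Nat.choose M (N - j) := by
        apply Finset.sum_lt_sum_of_subset
          (Finset.range_subset_range.2 (by omega)) (i := N)
        · exact Finset.mem_range.2 (by omega)
        · simp only [Finset.mem_range]; omega
        · simp only [Nat.sub_self, Nat.choose_zero_right, mul_one]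
          exact Nat.choose_pos hNM
        · intro j _ _; exact Nat.zero_le _

/-- For `M ≥ N ≥ 1`, the Hund-subspace dimension satisfies
`∑_{k=0}^{⌊N/2⌋} C(M, N−k)·C(N−k, k) ≤ C(2M, N)`, with strict inequality when
`N ≥ 2` and `M ≥ 2`. -/
theorem stmt_11 (M N : ℕ) (hN : 1 ≤ N) (hNM : N ≤ M) :
    (∑ k ∈ Finset.range (N / 2 + 1), Nat.choose M (N - k) * Nat.choose (N - k) k) ≤
        Nat.choose (2 * M) N ∧
      (2 ≤ N → 2 ≤ M →
        (∑ k ∈ Finset.range (N / 2 + 1), Nat.choose M (N - k) * Nat.choose (N - k) k) <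
          Nat.choose (2 * M) N) := by
  exact ⟨(hund_lt M N hN hNM).le, fun _ _ => hund_lt M N hN hNM⟩
end
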